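/- For all real numbers a, b > 0, the limit as k → ∞ of N_k(a,b)²/k exists and equals 2ab. -/

import Mathlib

open Filter

/-- `ellN a b k` is the `(k+1)`-st smallest element (with multiplicity) of
`{a*m + b*n : m, n ∈ ℤ≥0}`. -/
noncomputable def ellN (a b : ℝ) (k : ℕ) : ℝ :=
  sInf {L : ℝ | 0 ≤ L ∧ k + 1 ≤ {p : ℕ × ℕ | a * p.1 + b * p.2 ≤ L}.ncard}

open Classical in
/-- The finite set of lattice points `(m,n)` with `a*m + b*n ≤ L`, as a Finset. -/
noncomputable def latticeF (a b L : ℝ) : Finset (ℕ × ℕ) :=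
  (Finset.Iic ⌊L/a⌋₊ ×ˢ Finset.Iic ⌊L/b⌋₊).filter (fun p => a * p.1 + b * p.2 ≤ L)

lemma lattice_eq (a b : ℝ) (ha : 0 < a) (hb : 0 < b) (L : ℝ) :
    {p : ℕ × ℕ | a * p.1 + b * p.2 ≤ L} = ↑(latticeF a b L) := by
  classical
  ext ⟨m, n⟩
  simp only [Set.mem_setOf_eq, latticeF, Finset.coe_filter, Finset.mem_product,
    Finset.mem_Iic]
  constructor
  · intro h
    have hm : (m : ℝ) ≤ L / a := by
      rw [le_div_iff₀ ha]
      have : (0:ℝ) ≤ b * n := by positivity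
      linarith [this]
    have hn : (n : ℝ) ≤ L / b := by
      rw [le_div_iff₀ hb]
      have : (0:ℝ) ≤ a * m := by positivity
      linarith [this]
    exact ⟨⟨Nat.le_floor hm, Nat.le_floor hn⟩, h⟩
  · rintro ⟨-, h⟩
    exact h

lemma ncard_eq (a b : ℝ) (ha : 0 < a) (hb : 0 < b) (L : ℝ) :
    {p : ℕ × ℕ | a * p.1 + b * p.2 ≤ L}.ncard = (latticeF a b L).card := by
  rw [lattice_eq a b ha hb L, Set.ncard_coe_finset]

lemma lattice_lower (a b : ℝ) (ha : 0 < a) (hb : 0 < b) (L : ℝ) (hL : 0 ≤ L) :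
    L ^ 2 / (2 * a * b) ≤ ((latticeF a b L).card : ℝ) := by
  classical
  set M := ⌊L/a⌋₊ with hM
  set N := ⌊L/b⌋₊ with hN
  set R := Finset.Iic M ×ˢ Finset.Iic N with hR
  have haM : a * M ≤ L := by
    have := Nat.floor_le (by positivity : (0:ℝ) ≤ L / a)
    rw [← hM] at this
    calc a * M ≤ a * (L / a) := by nlinarith
    _ = L := by field_simp
  have hbN : b * N ≤ L := by
    have := Nat.floor_le (by positivity : (0:ℝ) ≤ L / b)
    rw [← hN] at this
    calc b * N ≤ b * (L / b) := by nlinarith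
    _ = L := by field_simp
  -- reflection injects the complement into latticeF
  have key : (R.filter (fun p => ¬ (a * p.1 + b * p.2 ≤ L))).card ≤ (latticeF a b L).card := by
    apply Finset.card_le_card_of_injOn (fun p => (M - p.1, N - p.2))
    · rintro ⟨m, n⟩ hp
      simp only [Finset.mem_coe, Finset.mem_filter, hR, Finset.mem_product, Finset.mem_Iic, not_le] at hp
      obtain ⟨⟨hm, hn⟩, hgt⟩ := hp
      simp only [Finset.mem_coe, latticeF, Finset.mem_filter, Finset.mem_product, Finset.mem_Iic]
      have c1 : ((M - m : ℕ) : ℝ) = (M : ℝ) - m := by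
        rw [Nat.cast_sub hm]
      have c2 : ((N - n : ℕ) : ℝ) = (N : ℝ) - n := by
        rw [Nat.cast_sub hn]
      have hcond : a * ((M - m : ℕ) : ℝ) + b * ((N - n : ℕ) : ℝ) ≤ L := by
        rw [c1, c2]; nlinarith
      refine ⟨⟨?_, ?_⟩, hcond⟩
      · apply Nat.le_floor
        rw [le_div_iff₀ ha]
        have hb0 : (0:ℝ) ≤ b * ((N - n : ℕ) : ℝ) := by positivity
        nlinarith [hcond, hb0]
      · apply Nat.le_floor
        rw [le_div_iff₀ hb]
        have ha0 : (0:ℝ) ≤ a * ((M - m : ℕ) : ℝ) := by positivity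
        nlinarith [hcond, ha0]
    · rintro ⟨m, n⟩ hp ⟨m', n'⟩ hq heq
      simp only [Finset.mem_coe, Finset.mem_filter, hR, Finset.mem_product, Finset.mem_Iic] at hp hq
      simp only [Prod.mk.injEq] at heq
      have := hp.1.1; have := hp.1.2; have := hq.1.1; have := hq.1.2
      ext <;> omega
  have hsplit : (latticeF a b L).card
      + (R.filter (fun p => ¬ (a * p.1 + b * p.2 ≤ L))).card = R.card := by
    simpa [latticeF, hR, hM, hN] using
      Finset.card_filter_add_card_filter_not
        (s := R) (p := fun p : ℕ × ℕ => a * p.1 + b * p.2 ≤ L)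
  have hRcard : (R.card : ℝ) = (M + 1) * (N + 1) := by
    rw [hR, Finset.card_product]
    simp [Nat.card_Iic]
  have h2 : (R.card : ℝ) ≤ 2 * (latticeF a b L).card := by
    have : R.card ≤ 2 * (latticeF a b L).card := by omega
    exact_mod_cast this
  have h3 : L / a < (M : ℝ) + 1 := by
    have := Nat.lt_floor_add_one (L / a); rw [← hM] at this; exact_mod_cast this
  have h4 : L / b < (N : ℝ) + 1 := by
    have := Nat.lt_floor_add_one (L / b); rw [← hN] at this; exact_mod_cast this
  have h5 : L / a * (L / b) ≤ ((M : ℝ) + 1) * ((N : ℝ) + 1) := by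
    apply mul_le_mul (le_of_lt h3) (le_of_lt h4) (by positivity)
    positivity
  rw [div_le_iff₀ (by positivity : (0:ℝ) < 2 * a * b)]
  have hLab : L ^ 2 = L / a * (L / b) * (a * b) := by field_simp
  rw [hLab]
  nlinarith [h5, h2, hRcard, mul_pos ha hb]

set_option maxHeartbeats 1000000 in
lemma lattice_upper (a b : ℝ) (ha : 0 < a) (hb : 0 < b) (L : ℝ) (hL : 0 ≤ L) :
    ((latticeF a b L).card : ℝ) ≤ L ^ 2 / (2 * a * b) + 2 * (a + b) * L / (a * b) + 1 := by
  classical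
  set M := ⌊L/a⌋₊ with hM
  set N := ⌊L/b⌋₊ with hN
  set R := Finset.Iic M ×ˢ Finset.Iic N with hR
  set S := latticeF a b L with hS
  set T := latticeF a b (L - (a + b)) with hT
  have haM : a * M ≤ L := by
    have := Nat.floor_le (by positivity : (0:ℝ) ≤ L / a)
    rw [← hM] at this
    calc a * M ≤ a * (L / a) := by nlinarith
    _ = L := by field_simp
  have hbN : b * N ≤ L := by
    have := Nat.floor_le (by positivity : (0:ℝ) ≤ L / b)
    rw [← hN] at this
    calc b * N ≤ b * (L / b) := by nlinarith
    _ = L := by field_simp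
  have h3 : L < a * ((M : ℝ) + 1) := by
    have := Nat.lt_floor_add_one (L / a); rw [← hM] at this
    have : L / a < (M : ℝ) + 1 := by exact_mod_cast this
    calc L = a * (L / a) := by field_simp
    _ < a * ((M:ℝ) + 1) := by nlinarith
  have h4 : L < b * ((N : ℝ) + 1) := by
    have := Nat.lt_floor_add_one (L / b); rw [← hN] at this
    have : L / b < (N : ℝ) + 1 := by exact_mod_cast this
    calc L = b * (L / b) := by field_simp
    _ < b * ((N:ℝ) + 1) := by nlinarith
  -- the reflection map
  have himg : (S.image (fun p => (M - p.1, N - p.2))).card = S.card := by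
    apply Finset.card_image_of_injOn
    rintro ⟨m, n⟩ hp ⟨m', n'⟩ hq heq
    simp only [Finset.mem_coe, hS, latticeF, Finset.mem_filter, Finset.mem_product,
      Finset.mem_Iic] at hp hq
    simp only [Prod.mk.injEq] at heq
    have := hp.1.1; have := hp.1.2; have := hq.1.1; have := hq.1.2
    ext <;> omega
  have hsub1 : S.image (fun p => (M - p.1, N - p.2)) ⊆ R := by
    intro q hq
    simp only [Finset.mem_image] at hq
    obtain ⟨p, hp, rfl⟩ := hq
    simp only [hR, Finset.mem_product, Finset.mem_Iic]
    omega
  have hsub2 : T ⊆ R := by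
    intro q hq
    simp only [hT, latticeF, Finset.mem_filter, Finset.mem_product, Finset.mem_Iic] at hq
    simp only [hR, Finset.mem_product, Finset.mem_Iic]
    obtain ⟨⟨h1, h2⟩, -⟩ := hq
    constructor
    · exact le_trans h1 (Nat.floor_le_floor (by gcongr <;> linarith))
    · exact le_trans h2 (Nat.floor_le_floor (by gcongr <;> linarith))
  have hdisj : Disjoint (S.image (fun p => (M - p.1, N - p.2))) T := by
    rw [Finset.disjoint_left]
    rintro ⟨q1, q2⟩ hq hqT
    simp only [Finset.mem_image] at hq
    obtain ⟨⟨m, n⟩, hp, heq⟩ := hq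
    simp only [Prod.mk.injEq] at heq
    obtain ⟨rfl, rfl⟩ := heq
    simp only [hS, latticeF, Finset.mem_filter, Finset.mem_product, Finset.mem_Iic] at hp
    obtain ⟨⟨hm, hn⟩, hple⟩ := hp
    simp only [hT, latticeF, Finset.mem_filter, Finset.mem_product, Finset.mem_Iic] at hqT
    have hc := hqT.2
    have c1 : ((M - m : ℕ) : ℝ) = (M : ℝ) - m := by rw [Nat.cast_sub hm]
    have c2 : ((N - n : ℕ) : ℝ) = (N : ℝ) - n := by rw [Nat.cast_sub hn]
    rw [c1, c2] at hc
    nlinarith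
  have hcards : S.card + T.card ≤ R.card := by
    calc S.card + T.card = (S.image (fun p => (M - p.1, N - p.2))).card + T.card := by
          rw [himg]
    _ = ((S.image (fun p => (M - p.1, N - p.2))) ∪ T).card := by
          rw [Finset.card_union_of_disjoint hdisj]
    _ ≤ R.card := Finset.card_le_card (Finset.union_subset hsub1 hsub2)
  have hRcard : (R.card : ℝ) = ((M:ℝ) + 1) * ((N:ℝ) + 1) := by
    rw [hR, Finset.card_product]
    simp [Nat.card_Iic]
  have hcardsR : (S.card : ℝ) + (T.card : ℝ) ≤ ((M:ℝ) + 1) * ((N:ℝ) + 1) := by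
    rw [← hRcard]; exact_mod_cast hcards
  have hbox : ((M:ℝ) + 1) * ((N:ℝ) + 1) * (a * b) ≤ (L + a) * (L + b) := by
    have e1 : a * ((M:ℝ) + 1) ≤ L + a := by nlinarith
    have e2 : b * ((N:ℝ) + 1) ≤ L + b := by nlinarith
    have p1 : (0:ℝ) ≤ a * ((M:ℝ) + 1) := by positivity
    have p2 : (0:ℝ) ≤ b * ((N:ℝ) + 1) := by positivity
    nlinarith
  have htarget : L ^ 2 / (2 * a * b) + 2 * (a + b) * L / (a * b) + 1
      = (L ^ 2 + 4 * (a + b) * L + 2 * a * b) / (2 * a * b) := by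
    field_simp
    ring
  rw [htarget, le_div_iff₀ (by positivity : (0:ℝ) < 2 * a * b)]
  rcases le_or_gt (a + b) L with hcase | hcase
  · have hTlow : (L - (a + b)) ^ 2 / (2 * a * b) ≤ (T.card : ℝ) :=
      lattice_lower a b ha hb _ (by linarith)
    rw [div_le_iff₀ (by positivity : (0:ℝ) < 2 * a * b)] at hTlow
    have k1 : ((S.card:ℝ) + (T.card:ℝ)) * (a*b) ≤ (L+a)*(L+b) := by
      calc ((S.card:ℝ) + (T.card:ℝ)) * (a*b) ≤ (((M:ℝ)+1)*((N:ℝ)+1)) * (a*b) :=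
            mul_le_mul_of_nonneg_right hcardsR (by positivity)
      _ ≤ (L+a)*(L+b) := hbox
    nlinarith [k1, hTlow, sq_nonneg (a+b)]
  · have hT0 : (0:ℝ) ≤ (T.card : ℝ) := Nat.cast_nonneg _
    have k1 : ((S.card:ℝ) + (T.card:ℝ)) * (a*b) ≤ (L+a)*(L+b) := by
      calc ((S.card:ℝ) + (T.card:ℝ)) * (a*b) ≤ (((M:ℝ)+1)*((N:ℝ)+1)) * (a*b) :=
            mul_le_mul_of_nonneg_right hcardsR (by positivity)
      _ ≤ (L+a)*(L+b) := hbox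
    have hT2 : (0:ℝ) ≤ (T.card:ℝ) * (a*b) := by positivity
    nlinarith [k1, hT2, mul_pos ha hb]

lemma ellN_mem (a b : ℝ) (ha : 0 < a) (hb : 0 < b) (k : ℕ) :
    Real.sqrt (2*a*b*((k:ℝ)+1)) ∈
      {L : ℝ | 0 ≤ L ∧ k + 1 ≤ {p : ℕ × ℕ | a * p.1 + b * p.2 ≤ L}.ncard} := by
  refine ⟨Real.sqrt_nonneg _, ?_⟩
  set L := Real.sqrt (2*a*b*((k:ℝ)+1)) with hLdef
  have hL : 0 ≤ L := Real.sqrt_nonneg _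
  have hsq : L^2 = 2*a*b*((k:ℝ)+1) := Real.sq_sqrt (by positivity)
  rw [ncard_eq a b ha hb]
  have hlow := lattice_lower a b ha hb L hL
  have heq : L^2/(2*a*b) = (k:ℝ)+1 := by rw [hsq]; field_simp
  have : (k:ℝ)+1 ≤ ((latticeF a b L).card : ℝ) := by rw [← heq]; exact hlow
  exact_mod_cast this

lemma ellN_le (a b : ℝ) (ha : 0 < a) (hb : 0 < b) (k : ℕ) :
    ellN a b k ≤ Real.sqrt (2*a*b*((k:ℝ)+1)) :=
  csInf_le ⟨0, fun _ hx => hx.1⟩ (ellN_mem a b ha hb k)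

lemma ellN_nonneg (a b : ℝ) (k : ℕ) : 0 ≤ ellN a b k :=
  Real.sInf_nonneg (fun _ hx => hx.1)

lemma ellN_ge (a b : ℝ) (ha : 0 < a) (hb : 0 < b) (k : ℕ) :
    Real.sqrt (2*a*b*(k:ℝ)) - 2*(a+b) ≤ ellN a b k := by
  apply le_csInf ⟨_, ellN_mem a b ha hb k⟩
  rintro L ⟨hL0, hLk⟩
  have hcard : ((k:ℝ)+1) ≤ ((latticeF a b L).card : ℝ) := by
    rw [ncard_eq a b ha hb] at hLk; exact_mod_cast hLk
  have hup := lattice_upper a b ha hb L hL0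
  have key : 2*a*b*(k:ℝ) ≤ (L + 2*(a+b))^2 := by
    have h1 : (k:ℝ) ≤ L ^ 2 / (2 * a * b) + 2 * (a + b) * L / (a * b) := by linarith
    have h2 : 2*a*b*(k:ℝ) ≤ L^2 + 4*(a+b)*L := by
      have hm := mul_le_mul_of_nonneg_left h1 (by positivity : (0:ℝ) ≤ 2*a*b)
      calc 2*a*b*(k:ℝ) ≤ 2*a*b*(L ^ 2 / (2 * a * b) + 2 * (a + b) * L / (a * b)) := hm
      _ = L^2 + 4*(a+b)*L := by field_simp; ring
    nlinarith [sq_nonneg (a+b)]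
  have hs : Real.sqrt (2*a*b*(k:ℝ)) ≤ L + 2*(a+b) := by
    calc Real.sqrt (2*a*b*(k:ℝ)) ≤ Real.sqrt ((L + 2*(a+b))^2) := Real.sqrt_le_sqrt key
    _ = L + 2*(a+b) := Real.sqrt_sq (by linarith)
  linarith

theorem stmt_4 (a b : ℝ) (ha : 0 < a) (hb : 0 < b) :
    Tendsto (fun k : ℕ => (ellN a b k) ^ 2 / k) atTop (nhds (2 * a * b)) := by
  have hc : (0:ℝ) < 2*a*b := by positivity
  set c : ℝ := 2*(a+b) with hcdef
  have hcpos : 0 < c := by positivity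
  have hsqk : Tendsto (fun k : ℕ => Real.sqrt k) atTop atTop := by
    apply tendsto_atTop_atTop.2
    intro bnd
    refine ⟨⌈bnd⌉₊^2, fun k hk => ?_⟩
    have hkc : ((⌈bnd⌉₊:ℝ))^2 ≤ (k:ℝ) := by exact_mod_cast hk
    calc bnd ≤ (⌈bnd⌉₊:ℝ) := Nat.le_ceil bnd
    _ = Real.sqrt ((⌈bnd⌉₊:ℝ)^2) := (Real.sqrt_sq (Nat.cast_nonneg _)).symm
    _ ≤ Real.sqrt k := Real.sqrt_le_sqrt hkc
  have hdiv : Tendsto (fun k : ℕ => c / Real.sqrt k) atTop (nhds 0) :=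
    Tendsto.div_atTop tendsto_const_nhds hsqk
  have hlo : Tendsto (fun k : ℕ => (Real.sqrt (2*a*b) - c / Real.sqrt k)^2) atTop
      (nhds (2*a*b)) := by
    have := ((tendsto_const_nhds (x := Real.sqrt (2*a*b)) (f := atTop)).sub hdiv).pow 2
    simpa [Real.sq_sqrt hc.le] using this
  have hhi : Tendsto (fun k : ℕ => 2*a*b + 2*a*b/(k:ℝ)) atTop (nhds (2*a*b)) := by
    simpa using (tendsto_const_nhds (x := 2*a*b) (f := atTop)).add
      (tendsto_const_div_atTop_nhds_zero_nat (2*a*b))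
  apply tendsto_of_tendsto_of_tendsto_of_le_of_le' hlo hhi
  · -- lower bound eventually
    filter_upwards [eventually_ge_atTop (max 1 ⌈c^2/(2*a*b)⌉₊)] with k hk
    have hk1 : 1 ≤ k := le_trans (le_max_left _ _) hk
    have hk2 : ⌈c^2/(2*a*b)⌉₊ ≤ k := le_trans (le_max_right _ _) hk
    have hkR : (1:ℝ) ≤ (k:ℝ) := by exact_mod_cast hk1
    have kpos : (0:ℝ) < (k:ℝ) := by linarith
    have hck : c^2 ≤ 2*a*b*(k:ℝ) := by
      have : c^2/(2*a*b) ≤ (k:ℝ) := le_trans (Nat.le_ceil _) (by exact_mod_cast hk2)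
      calc c^2 = c^2/(2*a*b) * (2*a*b) := by field_simp
      _ ≤ (k:ℝ) * (2*a*b) := by nlinarith
      _ = 2*a*b*(k:ℝ) := by ring
    have hcs : c ≤ Real.sqrt (2*a*b*(k:ℝ)) := by
      calc c = Real.sqrt (c^2) := (Real.sqrt_sq hcpos.le).symm
      _ ≤ Real.sqrt (2*a*b*(k:ℝ)) := Real.sqrt_le_sqrt hck
    have hN := ellN_ge a b ha hb k
    have h0 : 0 ≤ Real.sqrt (2*a*b*(k:ℝ)) - c := by linarith
    have hskpos : 0 < Real.sqrt (k:ℝ) := Real.sqrt_pos.mpr kpos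
    have hsq : Real.sqrt (2*a*b*(k:ℝ)) = Real.sqrt (2*a*b) * Real.sqrt (k:ℝ) :=
      Real.sqrt_mul hc.le _
    have e1 : Real.sqrt (2*a*b) - c / Real.sqrt (k:ℝ)
        = (Real.sqrt (2*a*b*(k:ℝ)) - c) / Real.sqrt (k:ℝ) := by
      rw [hsq]; field_simp
    rw [e1, div_pow, Real.sq_sqrt kpos.le]
    have hnum : (Real.sqrt (2*a*b*(k:ℝ)) - c)^2 ≤ (ellN a b k)^2 :=
      pow_le_pow_left₀ h0 (by linarith) 2
    exact (div_le_div_iff_of_pos_right kpos).mpr hnum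
  · -- upper bound eventually
    filter_upwards [eventually_ge_atTop 1] with k hk1
    have hkR : (1:ℝ) ≤ (k:ℝ) := by exact_mod_cast hk1
    have kpos : (0:ℝ) < (k:ℝ) := by linarith
    have hle := ellN_le a b ha hb k
    have h0 := ellN_nonneg a b k
    have hsq : (Real.sqrt (2*a*b*((k:ℝ)+1)))^2 = 2*a*b*((k:ℝ)+1) :=
      Real.sq_sqrt (by positivity)
    have hnum : (ellN a b k)^2 ≤ 2*a*b*((k:ℝ)+1) := by
      rw [← hsq]; exact pow_le_pow_left₀ h0 hle 2
    have e2 : 2*a*b + 2*a*b/(k:ℝ) = 2*a*b*((k:ℝ)+1)/(k:ℝ) := by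
      field_simp
    rw [e2]
    exact (div_le_div_iff_of_pos_right kpos).mpr hnum
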